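/- arXiv:2002.07530 — 3 statements merged into one kernel-verified Lean document; each statement's English description precedes it below -/
import Mathlib

section
/- For all real z₁, z₂, the average derivative of the sigmoid along the segment is controlled by the endpoint derivative: μ'(z₁)·(1 - exp(-|z₁-z₂|))/|z₁-z₂| ≤ ∫₀¹ μ'(z₁ + v(z₂-z₁)) dv ≤ μ'(z₁)·(exp(|z₁-z₂|) - 1)/|z₁-z₂| (when z₁ ≠ z₂). -/
noncomputable def sigmoid (x : ℝ) : ℝ := (1 + Real.exp (-x))⁻¹

lemma deriv_sigmoid (x : ℝ) :
    deriv sigmoid x = Real.exp (-x) / (1 + Real.exp (-x))^2 := by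
  have h1 : (1 + Real.exp (-x)) ≠ 0 := by positivity
  have : HasDerivAt sigmoid (Real.exp (-x) / (1 + Real.exp (-x))^2) x := by
    have h2 : HasDerivAt (fun x : ℝ => 1 + Real.exp (-x)) (-Real.exp (-x)) x := by
      simpa using (Real.hasDerivAt_exp (-x)).comp x ((hasDerivAt_id x).neg) |>.const_add 1
    have e : sigmoid = (fun x : ℝ => 1 + Real.exp (-x))⁻¹ := by funext y; simp [sigmoid]
    rw [e]
    simpa [div_eq_mul_inv, neg_div] using h2.inv h1
  exact this.deriv

lemma pointwise_bd (x s : ℝ) :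
    deriv sigmoid x * Real.exp (-|s|) ≤ deriv sigmoid (x + s) ∧
    deriv sigmoid (x + s) ≤ deriv sigmoid x * Real.exp |s| := by
  rw [deriv_sigmoid, deriv_sigmoid]
  have ha : 0 < Real.exp (-x) := Real.exp_pos _
  have hb : 0 < Real.exp (-s) := Real.exp_pos _
  have hxs : Real.exp (-(x+s)) = Real.exp (-x) * Real.exp (-s) := by
    rw [← Real.exp_add]; ring_nf
  set a := Real.exp (-x) with hA
  set b := Real.exp (-s) with hB
  have hpa : (0:ℝ) < 1 + a := by positivity
  have hpab : (0:ℝ) < 1 + a*b := by positivity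
  have heq : a/(1+a)^2 * b⁻¹ = a / ((1+a)^2 * b) := by field_simp
  rcases le_or_gt 0 s with hs | hs
  · have habs : |s| = s := abs_of_nonneg hs
    have hes : Real.exp (-|s|) = b := by rw [habs]
    have hes2 : Real.exp |s| = b⁻¹ := by rw [habs, hB, ← Real.exp_neg, neg_neg]
    have hb1 : b ≤ 1 := by rw [hB]; exact Real.exp_le_one_iff.2 (by linarith)
    rw [hxs, hes, hes2]
    constructor
    · rw [div_mul_eq_mul_div, div_le_div_iff₀ (by positivity) (by positivity)]
      have key : (1 + a*b)^2 ≤ (1+a)^2 :=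
        pow_le_pow_left₀ (by positivity) (by nlinarith) 2
      nlinarith [mul_le_mul_of_nonneg_left key (mul_pos ha hb).le]
    · rw [heq, div_le_div_iff₀ (by positivity) (by positivity)]
      have q1 : b*(1+a) ≤ 1 + a*b := by nlinarith
      have key : (b*(1+a))^2 ≤ (1+a*b)^2 :=
        pow_le_pow_left₀ (by positivity) q1 2
      nlinarith [mul_le_mul_of_nonneg_left key ha.le]
  · have habs : |s| = -s := abs_of_neg hs
    have hes : Real.exp (-|s|) = b⁻¹ := by rw [habs, neg_neg, hB, ← Real.exp_neg, neg_neg]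
    have hes2 : Real.exp |s| = b := by rw [habs]
    have hb1 : 1 ≤ b := by rw [hB]; exact Real.one_le_exp (by linarith)
    rw [hxs, hes, hes2]
    constructor
    · rw [heq, div_le_div_iff₀ (by positivity) (by positivity)]
      have q1 : 1 + a*b ≤ b*(1+a) := by nlinarith
      have key : (1+a*b)^2 ≤ (b*(1+a))^2 :=
        pow_le_pow_left₀ (by positivity) q1 2
      nlinarith [mul_le_mul_of_nonneg_left key ha.le]
    · rw [div_mul_eq_mul_div, div_le_div_iff₀ (by positivity) (by positivity)]
      have key : (1+a)^2 ≤ (1 + a*b)^2 :=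
        pow_le_pow_left₀ (by positivity) (by nlinarith) 2
      nlinarith [mul_le_mul_of_nonneg_left key (mul_pos ha hb).le]

lemma integral_exp_mul' (c : ℝ) (hc : c ≠ 0) :
    ∫ v in (0:ℝ)..1, Real.exp (c * v) = (Real.exp c - 1) / c := by
  rw [intervalIntegral.integral_comp_mul_left (fun x => Real.exp x) hc]
  simp [integral_exp, smul_eq_mul]
  field_simp

lemma cont_integrand (z₁ Δ : ℝ) :
    Continuous (fun v : ℝ => deriv sigmoid (z₁ + v * Δ)) := by
  simp only [deriv_sigmoid]
  have : ∀ y : ℝ, (1 + Real.exp (-y)) ^ 2 ≠ 0 := fun y => by positivity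
  fun_prop (disch := intro x; exact this _)

theorem sigmoid_avg_deriv_control (z₁ z₂ : ℝ) (h : z₁ ≠ z₂) :
    deriv sigmoid z₁ * (1 - Real.exp (-|z₁ - z₂|)) / |z₁ - z₂| ≤
      (∫ v in (0:ℝ)..1, deriv sigmoid (z₁ + v * (z₂ - z₁))) ∧
    (∫ v in (0:ℝ)..1, deriv sigmoid (z₁ + v * (z₂ - z₁))) ≤
      deriv sigmoid z₁ * (Real.exp |z₁ - z₂| - 1) / |z₁ - z₂| := by
  set Δ := z₂ - z₁ with hΔ
  set d := |z₁ - z₂| with hd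
  have hdΔ : d = |Δ| := by rw [hd, hΔ, abs_sub_comm]
  have hd0 : 0 < d := by rw [hd]; exact abs_pos.2 (sub_ne_zero.2 h)
  have hC := cont_integrand z₁ Δ
  have hCl : Continuous (fun v : ℝ => deriv sigmoid z₁ * Real.exp (-d * v)) := by
    fun_prop
  have hCu : Continuous (fun v : ℝ => deriv sigmoid z₁ * Real.exp (d * v)) := by
    fun_prop
  have habs : ∀ v : ℝ, 0 ≤ v → v ≤ 1 → |v * Δ| = v * d := by
    intro v hv _
    rw [abs_mul, abs_of_nonneg hv, hdΔ]
  have hlowint : ∫ v in (0:ℝ)..1, deriv sigmoid z₁ * Real.exp (-d * v)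
      = deriv sigmoid z₁ * (1 - Real.exp (-d)) / d := by
    rw [intervalIntegral.integral_const_mul, integral_exp_mul' (-d) (by linarith),
      div_neg, ← neg_div, neg_sub, mul_div_assoc]
  have hupint : ∫ v in (0:ℝ)..1, deriv sigmoid z₁ * Real.exp (d * v)
      = deriv sigmoid z₁ * (Real.exp d - 1) / d := by
    rw [intervalIntegral.integral_const_mul, integral_exp_mul' d (by linarith)]
    ring
  constructor
  · rw [← hlowint]
    apply intervalIntegral.integral_mono_on (by norm_num)
      (hCl.intervalIntegrable 0 1) (hC.intervalIntegrable 0 1)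
    intro v hv
    have := (pointwise_bd z₁ (v * Δ)).1
    rw [habs v hv.1 hv.2] at this
    have e : -d * v = -(v * d) := by ring
    rw [e]; exact this
  · rw [← hupint]
    apply intervalIntegral.integral_mono_on (by norm_num)
      (hC.intervalIntegrable 0 1) (hCu.intervalIntegrable 0 1)
    intro v hv
    have := (pointwise_bd z₁ (v * Δ)).2
    rwa [habs v hv.1 hv.2, mul_comm v d] at this
end

section
/- For all real z₁, z₂, the average derivative of the sigmoid along the segment satisfies ∫₀¹ μ'(z₁ + v(z₂-z₁)) dv ≥ μ'(z₁)·(1 + |z₁ - z₂|)^{-1}. -/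
noncomputable def sigS (x : ℝ) : ℝ := Real.exp (x/2) + Real.exp (-(x/2))

noncomputable def sigD (x : ℝ) : ℝ := ((sigS x)^2)⁻¹

lemma sigS_pos (x : ℝ) : 0 < sigS x := by
  unfold sigS; positivity

lemma sigD_pos (x : ℝ) : 0 < sigD x := by
  have := sigS_pos x
  unfold sigD; positivity

lemma alg_aux (u : ℝ) (hu0 : u ≠ 0) :
    ((u⁻¹ + u)^2)⁻¹ = u * u / (1 + u * u)^2 := by
  have h1 : 0 < u⁻¹ * u⁻¹ + 2 + u * u ∨ True := Or.inr trivial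
  field_simp

lemma sigD_eq (x : ℝ) : sigD x = Real.exp (-x) / (1 + Real.exp (-x))^2 := by
  have hu : Real.exp (-x) = Real.exp (-(x/2)) * Real.exp (-(x/2)) := by
    rw [← Real.exp_add]; ring_nf
  have hinv : Real.exp (x/2) = (Real.exp (-(x/2)))⁻¹ := by
    rw [← Real.exp_neg]; ring_nf
  unfold sigD sigS
  rw [hinv, hu]
  exact alg_aux _ (Real.exp_pos _).ne'

lemma sigmoid_hasDeriv (x : ℝ) : HasDerivAt sigmoid (sigD x) x := by
  have h0 : 0 < 1 + Real.exp (-x) := by positivity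
  have h1 : HasDerivAt (fun x : ℝ => 1 + Real.exp (-x)) (-Real.exp (-x)) x := by
    have := (Real.hasDerivAt_exp (-x)).comp x ((hasDerivAt_id x).neg)
    simpa using (this.const_add 1)
  have h2 := h1.inv h0.ne'
  have : -(-Real.exp (-x)) / (1 + Real.exp (-x))^2 = sigD x := by
    rw [sigD_eq]; ring
  rw [← this]
  exact h2

lemma deriv_sigmoid_s4 : deriv sigmoid = sigD :=
  funext fun x => (sigmoid_hasDeriv x).deriv

lemma sigS_cont : Continuous sigS := by
  unfold sigS; fun_prop

lemma sigD_cont : Continuous sigD := by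
  unfold sigD
  exact (sigS_cont.pow 2).inv₀ (fun x => (pow_pos (sigS_pos x) 2).ne')

lemma key_bound (x t : ℝ) : Real.exp (-|t|) * sigD x ≤ sigD (x + t) := by
  have hS : sigS (x + t) ≤ Real.exp (|t|/2) * sigS x := by
    unfold sigS
    have h1 : Real.exp ((x+t)/2) ≤ Real.exp (|t|/2) * Real.exp (x/2) := by
      rw [← Real.exp_add]
      exact Real.exp_le_exp.mpr (by nlinarith [le_abs_self t])
    have h2 : Real.exp (-((x+t)/2)) ≤ Real.exp (|t|/2) * Real.exp (-(x/2)) := by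
      rw [← Real.exp_add]
      exact Real.exp_le_exp.mpr (by nlinarith [neg_abs_le t])
    nlinarith
  have hsq : (sigS (x+t))^2 ≤ Real.exp (|t|) * (sigS x)^2 := by
    have h := mul_self_le_mul_self (sigS_pos (x+t)).le hS
    have he : Real.exp (|t|/2) * Real.exp (|t|/2) = Real.exp (|t|) := by
      rw [← Real.exp_add]; ring_nf
    nlinarith [Real.exp_pos (|t|/2), sigS_pos x, sigS_pos (x+t)]
  unfold sigD
  rw [Real.exp_neg]
  rw [← mul_inv]
  exact inv_anti₀ (pow_pos (sigS_pos _) 2) hsq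

lemma exp_int_bound (a : ℝ) (ha : 0 ≤ a) :
    (1 + a)⁻¹ ≤ ∫ v in (0:ℝ)..1, Real.exp (-(v * a)) := by
  rcases eq_or_lt_of_le ha with h | h
  · simp [← h]
  · have hderiv : ∀ v ∈ Set.uIcc (0:ℝ) 1, HasDerivAt (fun v => -Real.exp (-(v*a)) / a)
        (Real.exp (-(v*a))) v := by
      intro v _
      have h1 : HasDerivAt (fun v : ℝ => -(v*a)) (-a) v := by
        simpa [Pi.neg_def] using ((hasDerivAt_id v).mul_const a).neg
      have h2 := (Real.hasDerivAt_exp (-(v*a))).comp v h1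
      have h3 := (h2.neg).div_const a
      convert h3 using 1
      · rfl
      · rfl
      · rfl
      · field_simp
    have hint : IntervalIntegrable (fun v => Real.exp (-(v*a))) MeasureTheory.volume 0 1 := by
      apply Continuous.intervalIntegrable; fun_prop
    have := intervalIntegral.integral_eq_sub_of_hasDerivAt hderiv hint
    rw [this]
    have hexp := Real.add_one_le_exp a
    have hgt : 0 < Real.exp a := Real.exp_pos a
    have hne : Real.exp (-a) = (Real.exp a)⁻¹ := Real.exp_neg a
    simp only [one_mul, zero_mul, neg_zero, Real.exp_zero]
    rw [hne]
    rw [div_sub_div _ _ (ne_of_gt h) (ne_of_gt h), le_div_iff₀ (by positivity),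
      inv_mul_le_iff₀ (by positivity)]
    have h1 : (Real.exp a)⁻¹ * Real.exp a = 1 := inv_mul_cancel₀ hgt.ne'
    have h2 : (Real.exp a)⁻¹ * (1 + a) ≤ (Real.exp a)⁻¹ * Real.exp a :=
      mul_le_mul_of_nonneg_left (by linarith) (inv_pos.mpr hgt).le
    nlinarith [mul_pos h h, inv_pos.mpr hgt]

theorem sigmoid_avg_deriv_lower (z₁ z₂ : ℝ) :
    deriv sigmoid z₁ * (1 + |z₁ - z₂|)⁻¹ ≤
      ∫ v in (0:ℝ)..1, deriv sigmoid (z₁ + v * (z₂ - z₁)) := by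
  rw [deriv_sigmoid_s4]
  set a := |z₁ - z₂| with hadef
  have ha : 0 ≤ a := abs_nonneg _
  have habs : |z₂ - z₁| = a := by rw [hadef, abs_sub_comm]
  have step1 : ∫ v in (0:ℝ)..1, Real.exp (-(v * a)) * sigD z₁ ≤
      ∫ v in (0:ℝ)..1, sigD (z₁ + v * (z₂ - z₁)) := by
    apply intervalIntegral.integral_mono_on (by norm_num)
    · apply Continuous.intervalIntegrable; fun_prop
    · apply Continuous.intervalIntegrable
      exact sigD_cont.comp (by fun_prop)
    · intro v hv
      have hv0 : 0 ≤ v := hv.1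
      have : |v * (z₂ - z₁)| = v * a := by
        rw [abs_mul, abs_of_nonneg hv0, habs]
      calc Real.exp (-(v * a)) * sigD z₁
          = Real.exp (-|v * (z₂ - z₁)|) * sigD z₁ := by rw [this]
        _ ≤ sigD (z₁ + v * (z₂ - z₁)) := key_bound _ _
  have step2 : (∫ v in (0:ℝ)..1, Real.exp (-(v * a))) * sigD z₁ ≤
      ∫ v in (0:ℝ)..1, sigD (z₁ + v * (z₂ - z₁)) := by
    rw [← intervalIntegral.integral_mul_const]
    exact step1
  have step3 : sigD z₁ * (1 + a)⁻¹ ≤ (∫ v in (0:ℝ)..1, Real.exp (-(v * a))) * sigD z₁ := by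
    rw [mul_comm]
    exact mul_le_mul_of_nonneg_right (exp_int_bound a ha) (sigD_pos z₁).le
  linarith
end

section
/- Let {x_s} ⊂ ℝ^d with ‖x_s‖₂ ≤ X, λ > 0, and V_t := Σ_{s=1}^{t-1} x_s x_sᵀ + λ I_d. Then Σ_{t=1}^{T} ‖x_t‖²_{V_t^{-1}} ≤ 2·max(1, X²/λ)·log(det(V_{T+1})/λ^d), where ‖x‖²_M := xᵀ M x. -/
open Matrix Finset

private lemma elliptical_log_aux {u c : ℝ} (hu : 0 ≤ u) (huc : u ≤ c) :
    u ≤ 2 * max 1 c * Real.log (1 + u) := by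
  have h1u : (0:ℝ) < 1 + u := by linarith
  have hM1 : (1:ℝ) ≤ max 1 c := le_max_left _ _
  have hMc : c ≤ max 1 c := le_max_right _ _
  have hlog0 : 0 ≤ Real.log (1 + u) := Real.log_nonneg (by linarith)
  have hlow : u / (1 + u) ≤ Real.log (1 + u) := by
    have h := Real.log_le_sub_one_of_pos (x := (1+u)⁻¹) (by positivity)
    rw [Real.log_inv] at h
    have h2 : 1 - (1+u)⁻¹ = u / (1+u) := by field_simp; ring
    linarith [h2 ▸ (by linarith [h] : 1 - (1+u)⁻¹ ≤ Real.log (1+u))]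
  rcases le_or_gt u 1 with h | h
  · have h1 : u ≤ Real.log (1+u) * (1+u) := (div_le_iff₀ h1u).mp hlow
    nlinarith
  · have hlog2 : (1/2 : ℝ) ≤ Real.log (1 + u) := by
      have hd9 := Real.log_two_gt_d9
      have h2 : Real.log 2 ≤ Real.log (1 + u) :=
        Real.log_le_log (by norm_num) (by linarith)
      linarith
    nlinarith

theorem elliptical_potential {d : ℕ}
    (x : ℕ → EuclideanSpace ℝ (Fin d)) (X : ℝ) (hx : ∀ s, ‖x s‖ ≤ X)
    (lam : ℝ) (hlam : 0 < lam)
    (V : ℕ → Matrix (Fin d) (Fin d) ℝ)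
    (hV : ∀ t, V t = (∑ s ∈ Finset.Icc 1 (t - 1), Matrix.vecMulVec (x s) (x s))
        + lam • (1 : Matrix (Fin d) (Fin d) ℝ))
    (T : ℕ) :
    ∑ t ∈ Finset.Icc 1 T, (x t) ⬝ᵥ ((V t)⁻¹ *ᵥ (x t)) ≤
      2 * max 1 (X ^ 2 / lam) * Real.log ((V (T + 1)).det / lam ^ d) := by
  classical
  set u : ℕ → ℝ := fun t => (x t) ⬝ᵥ ((V t)⁻¹ *ᵥ (x t)) with hu
  -- each outer product is PSD
  have houter : ∀ s, (vecMulVec (x s) (x s) : Matrix (Fin d) (Fin d) ℝ).PosSemidef := by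
    intro s
    have he : (vecMulVec (x s) (x s) : Matrix (Fin d) (Fin d) ℝ)
        = (replicateRow Unit (show Fin d → ℝ from x s))ᴴ * (replicateRow Unit (show Fin d → ℝ from x s)) := by
      rw [conjTranspose_replicateRow, show star (show Fin d → ℝ from x s) = x s from funext fun i => rfl,
        ← vecMulVec_eq]
    rw [he]
    exact posSemidef_conjTranspose_mul_self _
  have hsum : ∀ t, (∑ s ∈ Icc 1 (t-1),
      (vecMulVec (x s) (x s) : Matrix (Fin d) (Fin d) ℝ)).PosSemidef := by
    intro t
    exact Finset.sum_induction _ _ (fun a b ha hb => ha.add hb)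
      Matrix.PosSemidef.zero (fun i _ => houter i)
  have hsm : (lam • (1 : Matrix (Fin d) (Fin d) ℝ)).PosDef := by
    rw [Matrix.smul_one_eq_diagonal]
    exact Matrix.PosDef.diagonal (fun i => hlam)
  have hVpd : ∀ t, (V t).PosDef := by
    intro t
    rw [hV t]
    exact Matrix.PosDef.posSemidef_add (hsum t) hsm
  have hunit : ∀ t, IsUnit (V t).det := fun t =>
    isUnit_iff_ne_zero.mpr (hVpd t).det_pos.ne'
  -- nonnegativity of u
  have hu0 : ∀ t, 0 ≤ u t := by
    intro t
    have h := ((hVpd t).inv.posSemidef).dotProduct_mulVec_nonneg (x t)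
    simpa [hu] using h
  -- upper bound u t ≤ X^2 / lam
  have hub : ∀ t, u t ≤ X ^ 2 / lam := by
    intro t
    set y : Fin d → ℝ := (V t)⁻¹ *ᵥ (x t) with hy
    have hVy : V t *ᵥ y = x t := by
      rw [hy, mulVec_mulVec, mul_nonsing_inv _ (hunit t), one_mulVec]
    have huty : u t = y ⬝ᵥ x t := by
      simp only [hu, ← hy]
      exact dotProduct_comm _ _
    have hquad : lam * (y ⬝ᵥ y) ≤ u t := by
      have hgap : ((V t) - lam • (1 : Matrix (Fin d) (Fin d) ℝ)).PosSemidef := by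
        rw [hV t, add_sub_cancel_right]
        exact hsum t
      have h := hgap.dotProduct_mulVec_nonneg y
      have e1 : ((V t) - lam • (1 : Matrix (Fin d) (Fin d) ℝ)) *ᵥ y
          = V t *ᵥ y - lam • y := by
        rw [sub_mulVec, smul_mulVec, one_mulVec]
      rw [e1, hVy] at h
      simp only [dotProduct_sub, dotProduct_smul, smul_eq_mul, star_trivial] at h
      linarith [huty ▸ h]
    have hCS : (u t) ^ 2 ≤ (x t ⬝ᵥ (x t)) * (y ⬝ᵥ y) := by
      have h := Finset.sum_mul_sq_le_sq_mul_sq Finset.univ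
        (fun i => x t i) (fun i => y i)
      have hxy : u t = ∑ i, x t i * y i := by
        simp only [hu, ← hy]; rfl
      have hx2 : x t ⬝ᵥ (x t) = ∑ i, x t i ^ 2 := by
        simp [dotProduct, sq]
      have hy2 : y ⬝ᵥ y = ∑ i, y i ^ 2 := by simp [dotProduct, sq]
      rw [hxy, hx2, hy2]; exact h
    have hxx : x t ⬝ᵥ (x t) ≤ X ^ 2 := by
      have h1 : x t ⬝ᵥ (x t) = ‖x t‖ ^ 2 := by
        rw [EuclideanSpace.norm_eq, Real.sq_sqrt (by positivity)]
        simp [dotProduct, sq, Real.norm_eq_abs, abs_mul_abs_self]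
      rw [h1]
      exact pow_le_pow_left₀ (norm_nonneg _) (hx t) 2
    have hxx0 : 0 ≤ x t ⬝ᵥ (x t) := by
      simp only [dotProduct]
      exact Finset.sum_nonneg fun i _ => mul_self_nonneg _
    have hyy0 : 0 ≤ y ⬝ᵥ y := by
      simp only [dotProduct]
      exact Finset.sum_nonneg fun i _ => mul_self_nonneg _
    rcases eq_or_lt_of_le (hu0 t) with h0 | h0
    · rw [← h0]; positivity
    · rw [le_div_iff₀ hlam]
      nlinarith [mul_le_mul_of_nonneg_left hquad hxx0,
        mul_le_mul_of_nonneg_right hxx h0.le]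
  -- the recursion for V
  have hstep : ∀ t, 1 ≤ t → V (t+1) = V t + vecMulVec (x t) (x t) := by
    intro t ht
    rw [hV (t+1), hV t, Nat.add_sub_cancel]
    have h2 : ∑ s ∈ Icc 1 t, (vecMulVec (x s) (x s) : Matrix (Fin d) (Fin d) ℝ)
        = (∑ s ∈ Icc 1 (t-1), vecMulVec (x s) (x s)) + vecMulVec (x t) (x t) := by
      have ht1 : t - 1 + 1 = t := by omega
      conv_lhs => rw [← ht1]
      rw [Finset.sum_Icc_succ_top (by omega : 1 ≤ (t-1)+1), ht1]
    rw [h2]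
    abel
  -- determinant recursion
  have hdet : ∀ t, 1 ≤ t → (V (t+1)).det = (V t).det * (1 + u t) := by
    intro t ht
    rw [hstep t ht, vecMulVec_eq Unit, det_add_replicateCol_mul_replicateRow (hunit t)]
    congr 1
    rw [← Matrix.replicateRow_vecMul, det_unique, Matrix.add_apply, Matrix.one_apply_eq,
      Matrix.replicateRow_mul_replicateCol_apply]
    have : u t = (x t ᵥ* (V t)⁻¹) ⬝ᵥ (x t) := by
      simp only [hu]
      exact dotProduct_mulVec _ _ _
    rw [this]
  -- determinant product formula
  have hdetprod : ∀ n, (V (n+1)).det = lam ^ d * ∏ t ∈ Icc 1 n, (1 + u t) := by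
    intro n
    induction n with
    | zero =>
      have h1 : V 1 = lam • (1 : Matrix (Fin d) (Fin d) ℝ) := by
        rw [hV 1]; simp
      rw [h1, Matrix.det_smul, Matrix.det_one]
      simp
    | succ n ih =>
      rw [hdet (n+1) (by omega), ih, Finset.prod_Icc_succ_top (by omega : 1 ≤ n+1)]
      ring
  have hpos : ∀ t, (0:ℝ) < 1 + u t := fun t => by linarith [hu0 t]
  have hlog : Real.log ((V (T+1)).det / lam ^ d)
      = ∑ t ∈ Icc 1 T, Real.log (1 + u t) := by
    rw [hdetprod T, mul_comm, mul_div_assoc,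
      div_self (pow_ne_zero d hlam.ne'), mul_one,
      Real.log_prod (fun t _ => (hpos t).ne')]
  calc ∑ t ∈ Icc 1 T, u t
      ≤ ∑ t ∈ Icc 1 T, 2 * max 1 (X ^ 2 / lam) * Real.log (1 + u t) :=
        Finset.sum_le_sum fun t _ => elliptical_log_aux (hu0 t) (hub t)
    _ = 2 * max 1 (X ^ 2 / lam) * ∑ t ∈ Icc 1 T, Real.log (1 + u t) := by
        rw [Finset.mul_sum]
    _ = 2 * max 1 (X ^ 2 / lam) * Real.log ((V (T + 1)).det / lam ^ d) := by
        rw [hlog]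
end
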